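/- For every λ ≥ 0, the set R_λ H = {R_λ f : f ∈ H} is dense in V in the metric of V. -/

import Mathlib

open scoped RealInnerProductSpace

/-- For every λ ≥ 0, the set R_λ H is dense in V in the metric of V. -/
theorem stmt4
    {V H : Type*} [NormedAddCommGroup V] [InnerProductSpace ℝ V] [CompleteSpace V]
    [NormedAddCommGroup H] [InnerProductSpace ℝ H] [CompleteSpace H]
    (ι : V →L[ℝ] H) (hinj : Function.Injective ι) (hdense : DenseRange ι)
    (hcontr : ∀ u : V, ‖ι u‖ ≤ ‖u‖)
    (R : ℝ → H → V)
    (hR : ∀ lam : ℝ, 0 ≤ lam → ∀ f : H, ∀ u : V,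
      ⟪f, ι u⟫ = lam * ⟪ι (R lam f), ι u⟫ + ⟪R lam f, u⟫)
    (lam : ℝ) (hlam : 0 ≤ lam) :
    DenseRange (R lam) := by
  set c : ℝ := lam / (1 + lam) with hc
  have hlam1 : (0:ℝ) < 1 + lam := by linarith
  have hc0 : 0 ≤ c := div_nonneg hlam (le_of_lt hlam1)
  have hc1 : c < 1 := by rw [hc, div_lt_one hlam1]; linarith
  -- contraction bound
  have hbound : ∀ h : H, ‖lam • ι (R lam h)‖ ≤ c * ‖h‖ := by
    intro h
    set w := R lam h with hw
    have h1 : ⟪h, ι w⟫ = lam * ‖ι w‖ ^ 2 + ‖w‖ ^ 2 := by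
      have := hR lam hlam h w
      rw [this, real_inner_self_eq_norm_sq, real_inner_self_eq_norm_sq]
    have h2 : ‖ι w‖ ≤ ‖w‖ := hcontr w
    have h3 : ⟪h, ι w⟫ ≤ ‖h‖ * ‖ι w‖ := real_inner_le_norm h (ι w)
    have key : (1 + lam) * ‖ι w‖ ^ 2 ≤ ‖h‖ * ‖ι w‖ := by
      nlinarith [norm_nonneg (ι w), norm_nonneg w]
    rw [norm_smul, Real.norm_eq_abs, abs_of_nonneg hlam]
    rcases eq_or_lt_of_le (norm_nonneg (ι w)) with h0 | h0
    · rw [← h0, mul_zero]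
      exact mul_nonneg hc0 (norm_nonneg h)
    · rw [hc, div_mul_eq_mul_div, le_div_iff₀ hlam1]
      nlinarith [mul_le_mul_of_nonneg_left key hlam]
  -- any vector V-orthogonal to the range is zero
  have hker : ∀ u : V, (∀ f : H, ⟪R lam f, u⟫ = 0) → u = 0 := by
    intro u hu
    have hiu : ι u = 0 := by
      have hall : ∀ f : H, ⟪f, ι u⟫ = 0 := by
        intro f
        set T : H → H := fun h => lam • ι (R lam h) with hT
        set g : ℕ → H := fun n => T^[n] f with hg
        have hgsucc : ∀ n, g (n + 1) = lam • ι (R lam (g n)) := by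
          intro n
          simp only [hg, Function.iterate_succ_apply']
          rfl
        have hinner : ∀ n, ⟪g n, ι u⟫ = ⟪f, ι u⟫ := by
          intro n
          induction n with
          | zero => simp [hg]
          | succ n ih =>
            rw [hgsucc n, real_inner_smul_left]
            have h1 := hR lam hlam (g n) u
            rw [hu (g n), add_zero] at h1
            rw [← h1, ih]
        have hnorm : ∀ n, ‖g n‖ ≤ c ^ n * ‖f‖ := by
          intro n
          induction n with
          | zero => simp [hg]
          | succ n ih =>
            calc ‖g (n + 1)‖ = ‖lam • ι (R lam (g n))‖ := by rw [hgsucc]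
              _ ≤ c * ‖g n‖ := hbound (g n)
              _ ≤ c * (c ^ n * ‖f‖) := by exact mul_le_mul_of_nonneg_left ih hc0
              _ = c ^ (n + 1) * ‖f‖ := by ring
        have habs : ∀ n, |⟪f, ι u⟫| ≤ c ^ n * (‖f‖ * ‖ι u‖) := by
          intro n
          calc |⟪f, ι u⟫| = |⟪g n, ι u⟫| := by rw [hinner]
            _ ≤ ‖g n‖ * ‖ι u‖ := abs_real_inner_le_norm _ _
            _ ≤ (c ^ n * ‖f‖) * ‖ι u‖ :=
                mul_le_mul_of_nonneg_right (hnorm n) (norm_nonneg _)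
            _ = c ^ n * (‖f‖ * ‖ι u‖) := by ring
        have hlim : Filter.Tendsto (fun n => c ^ n * (‖f‖ * ‖ι u‖))
            Filter.atTop (nhds 0) := by
          simpa using
            (tendsto_pow_atTop_nhds_zero_of_lt_one hc0 hc1).mul_const (‖f‖ * ‖ι u‖)
        have : |⟪f, ι u⟫| ≤ 0 := ge_of_tendsto' hlim habs
        exact abs_nonpos_iff.mp this
      have := hall (ι u)
      exact inner_self_eq_zero.mp this
    exact hinj (by rw [hiu, map_zero])
  -- uniqueness from coercivity
  have huniq : ∀ w : V, (∀ v : V, lam * ⟪ι w, ι v⟫ + ⟪w, v⟫ = 0) → w = 0 := by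
    intro w hw
    have h1 := hw w
    rw [real_inner_self_eq_norm_sq, real_inner_self_eq_norm_sq] at h1
    have h2 : ‖w‖ = 0 := by nlinarith [sq_nonneg ‖ι w‖, norm_nonneg w, sq_nonneg ‖w‖]
    exact norm_eq_zero.mp h2
  -- linearity of R lam
  have hadd : ∀ f g : H, R lam (f + g) = R lam f + R lam g := by
    intro f g
    have h0 : R lam (f + g) - (R lam f + R lam g) = 0 := by
      apply huniq
      intro v
      have h1 := hR lam hlam (f + g) v
      have h2 := hR lam hlam f v
      have h3 := hR lam hlam g v
      simp only [map_sub, map_add, inner_sub_left, inner_add_left] at h1 h2 h3 ⊢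
      linear_combination h2 + h3 - h1
    exact sub_eq_zero.mp h0
  have hsmul : ∀ (a : ℝ) (f : H), R lam (a • f) = a • R lam f := by
    intro a f
    have h0 : R lam (a • f) - a • R lam f = 0 := by
      apply huniq
      intro v
      have h1 := hR lam hlam (a • f) v
      have h2 := hR lam hlam f v
      simp only [map_sub, map_smul, inner_sub_left, real_inner_smul_left] at h1 h2 ⊢
      linear_combination a * h2 - h1
    exact sub_eq_zero.mp h0
  -- package as a linear map and use the orthogonal complement criterion
  let L : H →ₗ[ℝ] V :=
    { toFun := R lam
      map_add' := hadd
      map_smul' := hsmul }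
  set K := LinearMap.range L with hK
  have hKbot : Kᗮ = ⊥ := by
    rw [Submodule.eq_bot_iff]
    intro u hu
    apply hker u
    intro f
    exact (Submodule.mem_orthogonal K u).mp hu (R lam f) ⟨f, rfl⟩
  have hclos : K.topologicalClosure = ⊤ :=
    Submodule.topologicalClosure_eq_top_iff.mpr hKbot
  have hset : Set.range (R lam) = (K : Set V) := by
    rw [hK, LinearMap.coe_range]
    rfl
  rw [DenseRange, hset, dense_iff_closure_eq, ← Submodule.topologicalClosure_coe, hclos]
  rfl
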